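/- For d ≥ 1, the boundary of the (d+1)-dimensional cross-polytope is the unique non-d-collapsible flag complex on fewer than 2d+3 vertices; in particular every flag complex on at most 2d+1 vertices is d-collapsible. -/

import Mathlib

/-- An abstract simplicial complex on vertex type `V`: a family of nonempty
finite sets closed under passing to nonempty subsets. -/
structure AbsComplex (V : Type*) where
  faces : Set (Finset V)
  nonempty_mem : ∀ ⦃σ⦄, σ ∈ faces → σ.Nonempty
  down_closed : ∀ ⦃σ τ : Finset V⦄, σ ∈ faces → τ ⊆ σ → τ.Nonempty → τ ∈ faces

/-- The clique (flag) complex of a graph: faces are the nonempty cliques. -/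
def cliqueComplex {V : Type*} (G : SimpleGraph V) : AbsComplex V where
  faces := {σ | σ.Nonempty ∧ G.IsClique σ}
  nonempty_mem := fun _ h => h.1
  down_closed := fun _ _ h hsub hne => ⟨hne, h.2.subset (Finset.coe_subset.mpr hsub)⟩

/-- `σ` is a free face with unique proper coface `τ`. -/
def IsFreeFace {V : Type*} (X : AbsComplex V) (σ τ : Finset V) : Prop :=
  σ ∈ X.faces ∧ τ ∈ X.faces ∧ σ ⊂ τ ∧ ∀ ρ ∈ X.faces, σ ⊂ ρ → ρ = τ

/-- An elementary collapse: remove a free face together with its unique proper coface. -/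
def CollapseStep {V : Type*} (X Y : AbsComplex V) : Prop :=
  ∃ σ τ, IsFreeFace X σ τ ∧ Y.faces = X.faces \ {σ, τ}

/-- `X` is `d`-collapsible: some sequence of elementary collapses removes all
faces of dimension at least `d` (i.e. of cardinality at least `d + 1`). -/
def Collapsible {V : Type*} (d : ℕ) (X : AbsComplex V) : Prop :=
  ∃ Y : AbsComplex V, Relation.ReflTransGen CollapseStep X Y ∧ ∀ σ ∈ Y.faces, σ.card ≤ d

/-- The 1-skeleton of the boundary of the `(d+1)`-dimensional cross-polytope:
the complete `(d+1)`-partite graph with all parts of size 2. -/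
def crossGraph (d : ℕ) : SimpleGraph (Fin (d + 1) × Fin 2) where
  Adj u v := u.1 ≠ v.1
  symm := ⟨fun _ _ h => h.symm⟩
  loopless := ⟨fun _ h => h rfl⟩

/- ============ auxiliary development ============ -/

namespace Stmt4Aux

variable {V : Type*}

lemma AbsComplex.ext' {X Y : AbsComplex V} (h : X.faces = Y.faces) : X = Y := by
  cases X; cases Y; simpa using h

/-- Removing a free pair yields a complex. -/
def freeRemove (X : AbsComplex V) (σ τ : Finset V) (h : IsFreeFace X σ τ) : AbsComplex V where
  faces := X.faces \ {σ, τ}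
  nonempty_mem := fun _ hρ => X.nonempty_mem hρ.1
  down_closed := by
    rintro μ ν hμ hsub hne
    refine ⟨X.down_closed hμ.1 hsub hne, ?_⟩
    rintro (rfl | rfl)
    · rcases eq_or_ne μ ν with rfl | hne2
      · exact hμ.2 (Or.inl rfl)
      · have : μ = τ := h.2.2.2 μ hμ.1 (ssubset_of_subset_of_ne hsub (Ne.symm hne2))
        exact hμ.2 (Or.inr this)
    · have : σ ⊂ μ := lt_of_lt_of_le h.2.2.1 hsub
      have : μ = ν := h.2.2.2 μ hμ.1 this
      exact hμ.2 (Or.inr this)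

/-- Collapse steps using only free faces of cardinality at least `d`. -/
def StepGE (d : ℕ) (X Y : AbsComplex V) : Prop :=
  ∃ σ τ, IsFreeFace X σ τ ∧ d ≤ σ.card ∧ Y.faces = X.faces \ {σ, τ}

def Reaches (d : ℕ) (X Y : AbsComplex V) : Prop :=
  Relation.ReflTransGen (StepGE d) X Y

lemma Reaches.collapseSteps {d : ℕ} {X Y : AbsComplex V} (h : Reaches d X Y) :
    Relation.ReflTransGen CollapseStep X Y :=
  Relation.ReflTransGen.mono (r := StepGE d) (p := CollapseStep)
    (fun _ _ ⟨σ, τ, hf, _, he⟩ => ⟨σ, τ, hf, he⟩) X Y h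

lemma Reaches.faces_subset {d : ℕ} {X Y : AbsComplex V} (h : Reaches d X Y) :
    Y.faces ⊆ X.faces := by
  induction h with
  | refl => exact subset_rfl
  | tail _ hstep ih =>
    obtain ⟨σ, τ, _, _, he⟩ := hstep
    exact le_trans (he ▸ Set.diff_subset) ih

lemma stepGE_of_free {d : ℕ} (X : AbsComplex V) (σ τ : Finset V)
    (h : IsFreeFace X σ τ) (hc : d ≤ σ.card) :
    StepGE d X (freeRemove X σ τ h) := ⟨σ, τ, h, hc, rfl⟩

end Stmt4Aux
namespace Stmt4Aux
variable {V : Type*} [DecidableEq V]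

/-- Cone collapse: if `X` is a cone with apex `w`, it collapses (with free faces of
card ≥ d) to a complex of dimension < d. -/
lemma cone_collapse (d : ℕ) (hd : 1 ≤ d) (w : V) :
    ∀ n (X : AbsComplex V), X.faces.Finite →
      (∀ σ ∈ X.faces, insert w σ ∈ X.faces) →
      {σ ∈ X.faces | w ∉ σ ∧ d ≤ σ.card}.ncard ≤ n →
      ∃ Y, Reaches d X Y ∧ ∀ σ ∈ Y.faces, σ.card ≤ d := by
  intro n
  induction n with
  | zero =>
    intro X hfin hcone hm
    refine ⟨X, Relation.ReflTransGen.refl, ?_⟩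
    have hempty : {σ ∈ X.faces | w ∉ σ ∧ d ≤ σ.card} = ∅ := by
      have := Set.ncard_eq_zero (s := {σ ∈ X.faces | w ∉ σ ∧ d ≤ σ.card})
        (hfin.subset (Set.sep_subset _ _))
      exact this.mp (Nat.le_zero.mp hm)
    intro σ hσ
    by_contra hc
    push_neg at hc
    by_cases hwσ : w ∈ σ
    · have hne : (σ.erase w).Nonempty := by
        rcases Finset.exists_mem_ne (by omega : 1 < σ.card) w with ⟨x, hx, hxw⟩
        exact ⟨x, Finset.mem_erase.mpr ⟨hxw, hx⟩⟩
      have hmem : σ.erase w ∈ X.faces := X.down_closed hσ (Finset.erase_subset _ _) hne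
      have : σ.erase w ∈ ({σ ∈ X.faces | w ∉ σ ∧ d ≤ σ.card} : Set (Finset V)) := by
        refine ⟨hmem, Finset.notMem_erase _ _, ?_⟩
        have := Finset.card_erase_of_mem hwσ
        omega
      rw [hempty] at this; exact this
    · have : σ ∈ ({σ ∈ X.faces | w ∉ σ ∧ d ≤ σ.card} : Set (Finset V)) :=
        ⟨hσ, hwσ, by omega⟩
      rw [hempty] at this; exact this
  | succ n ih =>
    intro X hfin hcone hm
    set B : Set (Finset V) := {σ ∈ X.faces | w ∉ σ ∧ d ≤ σ.card} with hB
    by_cases hne : B.Nonempty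
    · have hBfin : B.Finite := hfin.subset (Set.sep_subset _ _)
      -- pick an element of maximal card
      obtain ⟨σ0, hσ0, hmax⟩ := Finset.exists_max_image hBfin.toFinset Finset.card
        (by rwa [Set.Finite.toFinset_nonempty])
      rw [Set.Finite.mem_toFinset] at hσ0
      have hmax' : ∀ ρ ∈ B, ρ.card ≤ σ0.card := by
        intro ρ hρ; exact hmax ρ (hBfin.mem_toFinset.mpr hρ)
      obtain ⟨hσ0f, hwσ0, hdσ0⟩ := hσ0
      have hτf : insert w σ0 ∈ X.faces := hcone σ0 hσ0f
      have hfree : IsFreeFace X σ0 (insert w σ0) := by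
        refine ⟨hσ0f, hτf, Finset.ssubset_insert hwσ0, ?_⟩
        intro ρ hρ hss
        by_cases hwρ : w ∈ ρ
        · have h1 : σ0 ⊆ ρ.erase w := Finset.subset_erase.mpr ⟨hss.subset, hwσ0⟩
          have h2 : ρ.erase w ∈ X.faces := X.down_closed hρ (Finset.erase_subset _ _)
            (Finset.Nonempty.mono h1 (X.nonempty_mem hσ0f))
          have h3 : ρ.erase w ∈ B := ⟨h2, Finset.notMem_erase _ _,
            le_trans hdσ0 (Finset.card_le_card h1)⟩
          have h4 : ρ.erase w = σ0 := (Finset.eq_of_subset_of_card_le h1 (hmax' _ h3)).symm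
          rw [← h4, Finset.insert_erase hwρ]
        · exfalso
          have : ρ ∈ B := ⟨hρ, hwρ, le_trans hdσ0 (le_of_lt (Finset.card_lt_card hss))⟩
          have := hmax' ρ this
          have := Finset.card_lt_card hss
          omega
      set X' := freeRemove X σ0 (insert w σ0) hfree with hX'
      have hX'faces : X'.faces = X.faces \ {σ0, insert w σ0} := rfl
      have hstep : StepGE d X X' := stepGE_of_free X _ _ hfree hdσ0
      have hcone' : ∀ σ ∈ X'.faces, insert w σ ∈ X'.faces := by
        rintro σ ⟨hσX, hσnot⟩
        refine ⟨hcone σ hσX, ?_⟩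
        rintro (h | h)
        · exact hwσ0 (h ▸ Finset.mem_insert_self w σ)
        · by_cases hwσ : w ∈ σ
          · exact hσnot (Or.inr (by rwa [Finset.insert_eq_self.mpr hwσ] at h))
          · have : σ = σ0 := by
              have h1 : σ ⊆ insert w σ0 := h ▸ Finset.subset_insert w σ
              have h2 : σ ⊆ σ0 := by
                intro x hx
                rcases Finset.mem_insert.mp (h1 hx) with rfl | hx0
                · exact absurd hx hwσ
                · exact hx0
              have h3 : σ0 ⊆ σ := by
                intro x hx
                have hxτ : x ∈ insert w σ := h.symm ▸ Finset.mem_insert_of_mem hx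
                rcases Finset.mem_insert.mp hxτ with rfl | hxσ
                · exact absurd hx hwσ0
                · exact hxσ
              exact Finset.Subset.antisymm h2 h3
            exact hσnot (Or.inl this)
      have hmeas : {σ ∈ X'.faces | w ∉ σ ∧ d ≤ σ.card}.ncard ≤ n := by
        have hsub : {σ ∈ X'.faces | w ∉ σ ∧ d ≤ σ.card} ⊆ B \ {σ0} := by
          rintro σ ⟨⟨hσX, hσnot⟩, hwσ, hdσ⟩
          exact ⟨⟨hσX, hwσ, hdσ⟩, fun h => hσnot (Or.inl h)⟩
        have h1 : {σ ∈ X'.faces | w ∉ σ ∧ d ≤ σ.card}.ncard ≤ (B \ {σ0}).ncard :=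
          Set.ncard_le_ncard hsub (hBfin.subset Set.diff_subset)
        have h2 : (B \ {σ0}).ncard < B.ncard := Set.ncard_diff_singleton_lt_of_mem
          ⟨hσ0f, hwσ0, hdσ0⟩ hBfin
        omega
      obtain ⟨Y, hYr, hYb⟩ := ih X' (hfin.subset (Set.diff_subset)) hcone' hmeas
      exact ⟨Y, Relation.ReflTransGen.head hstep hYr, hYb⟩
    · -- B empty: same as base case
      refine ⟨X, Relation.ReflTransGen.refl, ?_⟩
      have hempty : B = ∅ := Set.not_nonempty_iff_eq_empty.mp hne
      intro σ hσ
      by_contra hc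
      push_neg at hc
      by_cases hwσ : w ∈ σ
      · have hne2 : (σ.erase w).Nonempty := by
          rcases Finset.exists_mem_ne (by omega : 1 < σ.card) w with ⟨x, hx, hxw⟩
          exact ⟨x, Finset.mem_erase.mpr ⟨hxw, hx⟩⟩
        have hmem : σ.erase w ∈ X.faces := X.down_closed hσ (Finset.erase_subset _ _) hne2
        have : σ.erase w ∈ B := by
          refine ⟨hmem, Finset.notMem_erase _ _, ?_⟩
          have := Finset.card_erase_of_mem hwσ
          omega
        rw [hempty] at this; exact this
      · have : σ ∈ B := ⟨hσ, hwσ, by omega⟩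
        rw [hempty] at this; exact this

end Stmt4Aux
namespace Stmt4Aux
variable {V : Type*} [DecidableEq V]


lemma insert_inj_of_not_mem {v : V} {a b : Finset V} (ha : v ∉ a) (hb : v ∉ b)
    (h : insert v a = insert v b) : a = b := by
  rw [← Finset.erase_insert ha, h, Finset.erase_insert hb]

/-- One can run a collapse sequence of a subcomplex inside a bigger complex, provided
all extra faces are small (card ≤ d). -/
lemma reaches_with_junk (d : ℕ) {A A' : AbsComplex V} (h : Reaches d A A') :
    ∀ X : AbsComplex V, A.faces ⊆ X.faces →
      (∀ ρ ∈ X.faces, ρ ∉ A.faces → ρ.card ≤ d) →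
      ∃ X', Reaches d X X' ∧ X'.faces = A'.faces ∪ (X.faces \ A.faces) := by
  induction h with
  | refl =>
    intro X hsub hjunk
    refine ⟨X, Relation.ReflTransGen.refl, ?_⟩
    rw [Set.union_diff_cancel' (le_refl _) hsub]
  | @tail B B' hAB hstep ih =>
    intro X hsub hjunk
    obtain ⟨X₁, hX₁r, hX₁f⟩ := ih X hsub hjunk
    obtain ⟨σ, τ, ⟨hσB, hτB, hst, huniq⟩, hdσ, hB'⟩ := hstep
    have hBsub : B.faces ⊆ A.faces := Reaches.faces_subset hAB
    have hσX₁ : σ ∈ X₁.faces := hX₁f ▸ Or.inl hσB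
    have hτX₁ : τ ∈ X₁.faces := hX₁f ▸ Or.inl hτB
    have hfree : IsFreeFace X₁ σ τ := by
      refine ⟨hσX₁, hτX₁, hst, ?_⟩
      intro ρ hρ hss
      rw [hX₁f] at hρ
      rcases hρ with hρB | ⟨hρX, hρA⟩
      · exact huniq ρ hρB hss
      · exfalso
        have h1 : ρ.card ≤ d := hjunk ρ hρX hρA
        have h2 : σ.card < ρ.card := Finset.card_lt_card hss
        omega
    refine ⟨freeRemove X₁ σ τ hfree, Relation.ReflTransGen.tail hX₁r
      (stepGE_of_free X₁ σ τ hfree hdσ), ?_⟩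
    show X₁.faces \ {σ, τ} = B'.faces ∪ (X.faces \ A.faces)
    rw [hX₁f, hB']
    ext ρ
    constructor
    · rintro ⟨hρ | hρ, hρnot⟩
      · exact Or.inl ⟨hρ, hρnot⟩
      · exact Or.inr hρ
    · rintro (⟨hρ, hρnot⟩ | hρ)
      · exact ⟨Or.inl hρ, hρnot⟩
      · refine ⟨Or.inr hρ, ?_⟩
        rintro (rfl | rfl)
        · exact hρ.2 (hBsub hσB)
        · exact hρ.2 (hBsub hτB)

/-- `L` is the link of `v` in `X` (and `v` is a vertex of `X`). -/
def StarOf (X : AbsComplex V) (v : V) (L : AbsComplex V) : Prop :=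
  ({v} : Finset V) ∈ X.faces ∧
  (∀ σ : Finset V, σ ∈ L.faces ↔ (v ∉ σ ∧ σ.Nonempty ∧ insert v σ ∈ X.faces)) ∧
  (∀ ρ ∈ X.faces, v ∈ ρ → ρ = {v} ∨ ρ.erase v ∈ L.faces)

lemma lift_reaches (c : ℕ) {L L' : AbsComplex V} (h : Reaches c L L') :
    ∀ (X : AbsComplex V) (v : V), StarOf X v L →
      ∃ X', Reaches (c + 1) X X' ∧ StarOf X' v L' ∧
        {ρ ∈ X'.faces | v ∉ ρ} = {ρ ∈ X.faces | v ∉ ρ} := by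
  induction h with
  | refl => intro X v hstar; exact ⟨X, Relation.ReflTransGen.refl, hstar, rfl⟩
  | @tail B B' hLB hstep ih =>
    intro X v hstar
    obtain ⟨X₁, hX₁r, hX₁star, hX₁same⟩ := ih X v hstar
    obtain ⟨hv, hmem, hstarm⟩ := hX₁star
    obtain ⟨σ, τ, ⟨hσB, hτB, hst, huniq⟩, hdσ, hB'⟩ := hstep
    obtain ⟨hvσ, hσne, hσX⟩ := (hmem σ).mp hσB
    obtain ⟨hvτ, hτne, hτX⟩ := (hmem τ).mp hτB
    have hss : insert v σ ⊂ insert v τ := by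
      rcases (Finset.ssubset_iff_of_subset hst.subset).mp hst with ⟨x, hxτ, hxσ⟩
      refine Finset.ssubset_iff_of_subset (Finset.insert_subset_insert v hst.subset) |>.mpr
        ⟨x, Finset.mem_insert_of_mem hxτ, ?_⟩
      intro hx
      rcases Finset.mem_insert.mp hx with rfl | hx2
      · exact hvτ hxτ
      · exact hxσ hx2
    have hfree : IsFreeFace X₁ (insert v σ) (insert v τ) := by
      refine ⟨hσX, hτX, hss, ?_⟩
      intro ρ hρ hssρ
      have hvρ : v ∈ ρ := hssρ.subset (Finset.mem_insert_self v σ)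
      rcases hstarm ρ hρ hvρ with h1 | h1
      · exfalso
        have : insert v σ ⊆ {v} := h1 ▸ hssρ.subset
        rcases hσne with ⟨x, hx⟩
        have hxv : x = v := Finset.mem_singleton.mp (this (Finset.mem_insert_of_mem hx))
        exact hvσ (hxv ▸ hx)
      · have h2 : σ ⊆ ρ.erase v := by
          intro x hx
          exact Finset.mem_erase.mpr ⟨fun hxv => hvσ (hxv ▸ hx),
            hssρ.subset (Finset.mem_insert_of_mem hx)⟩
        have h3 : σ ⊂ ρ.erase v := by
          refine ssubset_of_subset_of_ne h2 (fun hcontra => hssρ.ne ?_)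
          rw [hcontra, Finset.insert_erase hvρ]
        have h4 : ρ.erase v = τ := huniq _ h1 h3
        rw [← h4, Finset.insert_erase hvρ]
    have hfree' := hfree
    refine ⟨freeRemove X₁ (insert v σ) (insert v τ) hfree,
      Relation.ReflTransGen.tail hX₁r (stepGE_of_free X₁ _ _ hfree
        (by rw [Finset.card_insert_of_notMem hvσ]; omega)), ?_, ?_⟩
    · -- StarOf for the new complex
      have hfr : (freeRemove X₁ (insert v σ) (insert v τ) hfree).faces
          = X₁.faces \ {insert v σ, insert v τ} := rfl
      refine ⟨?_, ?_, ?_⟩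
      · rw [hfr]
        refine ⟨hv, ?_⟩
        rintro (h | h)
        · rcases hσne with ⟨x, hx⟩
          have : x ∈ ({v} : Finset V) := h ▸ Finset.mem_insert_of_mem hx
          exact hvσ (Finset.mem_singleton.mp this ▸ hx)
        · rcases hτne with ⟨x, hx⟩
          have : x ∈ ({v} : Finset V) := h ▸ Finset.mem_insert_of_mem hx
          exact hvτ (Finset.mem_singleton.mp this ▸ hx)
      · intro μ
        rw [hB']
        constructor
        · rintro ⟨hμB, hμnot⟩
          obtain ⟨h1, h2, h3⟩ := (hmem μ).mp hμB
          refine ⟨h1, h2, hfr ▸ ⟨h3, ?_⟩⟩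
          rintro (h | h)
          · exact hμnot (Or.inl (insert_inj_of_not_mem h1 hvσ h))
          · exact hμnot (Or.inr (insert_inj_of_not_mem h1 hvτ h))
        · rintro ⟨h1, h2, h3⟩
          rw [hfr] at h3
          refine ⟨(hmem μ).mpr ⟨h1, h2, h3.1⟩, ?_⟩
          rintro (rfl | rfl)
          · exact h3.2 (Or.inl rfl)
          · exact h3.2 (Or.inr rfl)
      · intro ρ hρ hvρ
        rw [hfr] at hρ
        rcases hstarm ρ hρ.1 hvρ with h1 | h1
        · exact Or.inl h1
        · right
          rw [hB']
          refine ⟨h1, ?_⟩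
          intro hmem2
          rcases hmem2 with h | h
          · exact hρ.2 (Or.inl (by rw [← h, Finset.insert_erase hvρ]))
          · rw [Set.mem_singleton_iff] at h
            exact hρ.2 (Or.inr (by rw [← h, Finset.insert_erase hvρ]; exact Set.mem_singleton _))
    · -- v-free part unchanged
      rw [← hX₁same]
      show {ρ ∈ X₁.faces \ {insert v σ, insert v τ} | v ∉ ρ} = {ρ ∈ X₁.faces | v ∉ ρ}
      ext ρ
      constructor
      · rintro ⟨⟨h1, _⟩, h2⟩; exact ⟨h1, h2⟩
      · rintro ⟨h1, h2⟩
        refine ⟨⟨h1, ?_⟩, h2⟩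
        rintro (rfl | rfl)
        · exact h2 (Finset.mem_insert_self v σ)
        · exact h2 (Finset.mem_insert_self v τ)

end Stmt4Aux
namespace Stmt4Aux
variable {V : Type*} [DecidableEq V]

/-- The flag complex of `G` restricted to vertex set `S`. -/
def flagOn (G : SimpleGraph V) (S : Finset V) : AbsComplex V where
  faces := {σ | σ.Nonempty ∧ σ ⊆ S ∧ G.IsClique σ}
  nonempty_mem := fun _ h => h.1
  down_closed := fun _ _ h hsub hne =>
    ⟨hne, hsub.trans h.2.1, h.2.2.subset (Finset.coe_subset.mpr hsub)⟩

lemma mem_flagOn {G : SimpleGraph V} {S : Finset V} {σ : Finset V} :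
    σ ∈ (flagOn G S).faces ↔ σ.Nonempty ∧ σ ⊆ S ∧ G.IsClique σ := Iff.rfl

lemma flagOn_finite [Fintype V] (G : SimpleGraph V) (S : Finset V) :
    (flagOn G S).faces.Finite := Set.toFinite _

lemma singleton_mem_flagOn {G : SimpleGraph V} {S : Finset V} {v : V} (hv : v ∈ S) :
    ({v} : Finset V) ∈ (flagOn G S).faces := by
  refine ⟨Finset.singleton_nonempty v, Finset.singleton_subset_iff.mpr hv, ?_⟩
  simp [SimpleGraph.isClique_singleton]

lemma adj_of_mem_clique {G : SimpleGraph V} {σ : Finset V} (h : G.IsClique σ)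
    {x y : V} (hx : x ∈ σ) (hy : y ∈ σ) (hxy : x ≠ y) : G.Adj x y :=
  h (by exact_mod_cast hx) (by exact_mod_cast hy) hxy

lemma insert_mem_flagOn {G : SimpleGraph V} {S : Finset V} {σ : Finset V} {w : V}
    (hσ : σ ∈ (flagOn G S).faces) (hw : w ∈ S)
    (hadj : ∀ x ∈ σ, x ≠ w → G.Adj w x) : insert w σ ∈ (flagOn G S).faces := by
  obtain ⟨hne, hsub, hcl⟩ := hσ
  refine ⟨Finset.insert_nonempty _ _, Finset.insert_subset hw hsub, ?_⟩
  rw [Finset.coe_insert]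
  apply hcl.insert
  intro b hb hbw
  exact hadj b (by exact_mod_cast hb) (Ne.symm hbw)

/-- The faces of `flagOn G S` avoiding `v` are exactly the faces of `flagOn G (S.erase v)`. -/
lemma flagOn_erase (G : SimpleGraph V) (S : Finset V) (v : V) :
    (flagOn G (S.erase v)).faces = {ρ ∈ (flagOn G S).faces | v ∉ ρ} := by
  ext ρ
  constructor
  · rintro ⟨h1, h2, h3⟩
    refine ⟨⟨h1, h2.trans (Finset.erase_subset _ _), h3⟩, fun hv => ?_⟩
    exact Finset.notMem_erase v S (h2 hv)
  · rintro ⟨⟨h1, h2, h3⟩, hv⟩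
    exact ⟨h1, fun x hx => Finset.mem_erase.mpr ⟨fun hxf => hv (hxf ▸ hx), h2 hx⟩, h3⟩

/-- The link of `v` in `flagOn G S` is the flag complex on the neighbourhood. -/
lemma starOf_flagOn (G : SimpleGraph V) (S : Finset V) (v : V) (hv : v ∈ S)
    (N : Finset V) (hN : ∀ x, x ∈ N ↔ x ∈ S ∧ G.Adj v x) :
    StarOf (flagOn G S) v (flagOn G N) := by
  have hvN : v ∉ N := fun h => G.loopless.irrefl v ((hN v).mp h).2
  refine ⟨singleton_mem_flagOn hv, ?_, ?_⟩
  · intro σ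
    constructor
    · rintro ⟨h1, h2, h3⟩
      have hvσ : v ∉ σ := fun h => hvN (h2 h)
      refine ⟨hvσ, h1, ?_⟩
      refine insert_mem_flagOn ⟨h1, fun x hx => ((hN x).mp (h2 hx)).1, h3⟩ hv ?_
      intro x hx _
      exact ((hN x).mp (h2 hx)).2
    · rintro ⟨h1, h2, h3⟩
      obtain ⟨_, hsub, hcl⟩ := h3
      refine ⟨h2, ?_, hcl.subset (by exact_mod_cast Finset.subset_insert v σ)⟩
      intro x hx
      refine (hN x).mpr ⟨hsub (Finset.mem_insert_of_mem hx), ?_⟩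
      exact adj_of_mem_clique hcl (Finset.mem_insert_self v σ)
        (Finset.mem_insert_of_mem hx) (fun h => h1 (h ▸ hx))
  · intro ρ hρ hvρ
    by_cases hone : ρ = {v}
    · exact Or.inl hone
    · right
      obtain ⟨h1, h2, h3⟩ := hρ
      have hne : (ρ.erase v).Nonempty := by
        have h11 : 1 < ρ.card := by
          rcases Finset.eq_singleton_or_nontrivial hvρ with h | h
          · exact absurd h hone
          · exact Finset.one_lt_card_iff_nontrivial.mpr h
        rcases Finset.exists_mem_ne h11 v with ⟨x, hx, hxv⟩
        exact ⟨x, Finset.mem_erase.mpr ⟨hxv, hx⟩⟩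
      refine ⟨hne, ?_, h3.subset (by exact_mod_cast Finset.erase_subset v ρ)⟩
      intro x hx
      obtain ⟨hxv, hxρ⟩ := Finset.mem_erase.mp hx
      exact (hN x).mpr ⟨h2 hxρ, adj_of_mem_clique h3 hvρ hxρ (Ne.symm hxv)⟩

end Stmt4Aux
namespace Stmt4Aux
variable {V : Type*} [DecidableEq V] [Fintype V]

theorem main_thm (G : SimpleGraph V) :
    ∀ d : ℕ, 1 ≤ d → ∀ S : Finset V, S.card ≤ 2 * d + 2 →
      (∃ Y, Reaches d (flagOn G S) Y ∧ ∀ σ ∈ Y.faces, σ.card ≤ d) ∨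
      (S.card = 2 * d + 2 ∧ ∀ v ∈ S, ∃! u, u ∈ S ∧ u ≠ v ∧ ¬ G.Adj v u) := by
  intro d
  induction d with
  | zero => intro h; exact absurd h (by omega)
  | succ e ihe =>
    intro _
    suffices H : ∀ n (S : Finset V), S.card ≤ n → S.card ≤ 2 * (e + 1) + 2 →
        (∃ Y, Reaches (e + 1) (flagOn G S) Y ∧ ∀ σ ∈ Y.faces, σ.card ≤ e + 1) ∨
        (S.card = 2 * (e + 1) + 2 ∧ ∀ v ∈ S, ∃! u, u ∈ S ∧ u ≠ v ∧ ¬ G.Adj v u) by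
      intro S hS; exact H S.card S le_rfl hS
    intro n
    induction n with
    | zero =>
      intro S hS0 _
      left
      refine ⟨flagOn G S, Relation.ReflTransGen.refl, ?_⟩
      rintro σ ⟨hne, hsub, _⟩
      exfalso
      obtain ⟨x, hx⟩ := hne
      have := Finset.card_eq_zero.mp (Nat.le_zero.mp hS0)
      rw [this] at hsub
      exact absurd (hsub hx) (Finset.notMem_empty x)
    | succ n ihn =>
      intro S hSn hS2
      by_cases h0 : ∀ σ ∈ (flagOn G S).faces, σ.card ≤ e + 1
      · exact Or.inl ⟨flagOn G S, Relation.ReflTransGen.refl, h0⟩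
      push_neg at h0
      obtain ⟨σbig, hσbigmem, hσbigcard⟩ := h0
      -- universal vertex: cone
      by_cases hw : ∃ w ∈ S, ∀ x ∈ S, x ≠ w → G.Adj w x
      · obtain ⟨w, hwS, hwadj⟩ := hw
        left
        exact cone_collapse (e + 1) (by omega) w _ (flagOn G S) (flagOn_finite G S)
          (fun σ hσ => insert_mem_flagOn hσ hwS (fun x hx hxw => hwadj x (hσ.2.1 hx) hxw))
          le_rfl
      push_neg at hw
      -- vertex with two non-neighbours?
      by_cases hv2 : ∃ v ∈ S, ∃ u₁ ∈ S, ∃ u₂ ∈ S,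
          u₁ ≠ u₂ ∧ u₁ ≠ v ∧ u₂ ≠ v ∧ ¬G.Adj v u₁ ∧ ¬G.Adj v u₂
      · obtain ⟨v, hvS, u₁, hu₁S, u₂, hu₂S, hu12, hu1v, hu2v, hnadj1, hnadj2⟩ := hv2
        left
        classical
        set N : Finset V := S.filter (fun x => G.Adj v x) with hNdef
        have hNmem : ∀ x, x ∈ N ↔ x ∈ S ∧ G.Adj v x := by
          intro x; simp [hNdef]
        have hNcard : N.card + 3 ≤ S.card := by
          have hsub : N ⊆ ((S.erase v).erase u₁).erase u₂ := by
            intro x hx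
            obtain ⟨hxS, hxadj⟩ := (hNmem x).mp hx
            refine Finset.mem_erase.mpr ⟨fun h => hnadj2 (h ▸ hxadj), ?_⟩
            refine Finset.mem_erase.mpr ⟨fun h => hnadj1 (h ▸ hxadj), ?_⟩
            exact Finset.mem_erase.mpr ⟨fun h => G.loopless.irrefl v (h ▸ hxadj), hxS⟩
          have h1 := Finset.card_le_card hsub
          have hu₂' : u₂ ∈ (S.erase v).erase u₁ :=
            Finset.mem_erase.mpr ⟨hu12.symm, Finset.mem_erase.mpr ⟨hu2v, hu₂S⟩⟩
          have hu₁' : u₁ ∈ S.erase v := Finset.mem_erase.mpr ⟨hu1v, hu₁S⟩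
          rw [Finset.card_erase_of_mem hu₂', Finset.card_erase_of_mem hu₁',
            Finset.card_erase_of_mem hvS] at h1
          have h2 : 1 ≤ ((S.erase v).erase u₁).card := Finset.card_pos.mpr ⟨u₂, hu₂'⟩
          rw [Finset.card_erase_of_mem hu₁', Finset.card_erase_of_mem hvS] at h2
          omega
        have hvcard : (S.erase v).card = S.card - 1 := Finset.card_erase_of_mem hvS
        have hAfaces : (flagOn G (S.erase v)).faces = {ρ ∈ (flagOn G S).faces | v ∉ ρ} :=
          flagOn_erase G S v
        -- the recursive collapse on S.erase v
        have hrec : ∃ A', Reaches (e + 1) (flagOn G (S.erase v)) A' ∧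
            ∀ σ ∈ A'.faces, σ.card ≤ e + 1 := by
          rcases ihn (S.erase v) (by omega) (by omega) with h | ⟨hc, _⟩
          · exact h
          · omega
        obtain ⟨A', hA'r, hA'b⟩ := hrec
        by_cases hsmall : N.card ≤ e
        · -- direct junk absorption: all faces containing v are small
          have hjunk : ∀ ρ ∈ (flagOn G S).faces, ρ ∉ (flagOn G (S.erase v)).faces →
              ρ.card ≤ e + 1 := by
            intro ρ hρ hρA
            rw [hAfaces] at hρA
            have hvρ : v ∈ ρ := by
              by_contra hvρ
              exact hρA ⟨hρ, hvρ⟩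
            have hsub : ρ ⊆ insert v N := by
              intro x hx
              rcases eq_or_ne x v with rfl | hxv
              · exact Finset.mem_insert_self _ _
              · refine Finset.mem_insert_of_mem ((hNmem x).mpr ⟨hρ.2.1 hx, ?_⟩)
                exact adj_of_mem_clique hρ.2.2 hvρ hx (Ne.symm hxv)
            have := Finset.card_le_card hsub
            have := Finset.card_insert_le v N
            omega
          obtain ⟨X', hX'r, hX'f⟩ := reaches_with_junk (e + 1) hA'r (flagOn G S)
            (by rw [hAfaces]; exact Set.sep_subset _ _) hjunk
          refine ⟨X', hX'r, ?_⟩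
          intro σ hσ
          rw [hX'f] at hσ
          rcases hσ with hσ | ⟨hσX, hσA⟩
          · exact hA'b σ hσ
          · exact hjunk σ hσX hσA
        · -- N.card ≥ e + 1
          rcases Nat.eq_zero_or_pos e with rfl | he1
          · -- d = 1 : here N.card = 1, single collapse step kills the star of v
            have hN1 : N.card = 1 := by omega
            obtain ⟨w, hNw⟩ := Finset.card_eq_one.mp hN1
            have hwN : w ∈ N := hNw ▸ Finset.mem_singleton_self w
            obtain ⟨hwS, hwadj⟩ := (hNmem w).mp hwN
            have hwv : w ≠ v := fun h => G.loopless.irrefl v (h ▸ hwadj)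
            have hσf : ({v} : Finset V) ∈ (flagOn G S).faces := singleton_mem_flagOn hvS
            have hτf : insert v ({w} : Finset V) ∈ (flagOn G S).faces := by
              refine insert_mem_flagOn (singleton_mem_flagOn hwS) hvS ?_
              intro x hx _
              rw [Finset.mem_singleton] at hx
              exact hx ▸ hwadj
            have hmemτ : ∀ ρ ∈ (flagOn G S).faces, v ∈ ρ → ρ ⊆ insert v {w} := by
              intro ρ hρ hvρ x hx
              rcases eq_or_ne x v with rfl | hxv
              · exact Finset.mem_insert_self _ _
              · have : x ∈ N := (hNmem x).mpr
                  ⟨hρ.2.1 hx, adj_of_mem_clique hρ.2.2 hvρ hx (Ne.symm hxv)⟩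
                rw [hNw] at this
                exact Finset.mem_insert_of_mem this
            have hfree : IsFreeFace (flagOn G S) {v} (insert v {w}) := by
              refine ⟨hσf, hτf, ?_, ?_⟩
              · refine Finset.ssubset_iff_of_subset ?_ |>.mpr ⟨w, ?_, ?_⟩
                · intro x hx
                  rw [Finset.mem_singleton] at hx
                  exact hx ▸ Finset.mem_insert_self v {w}
                · exact Finset.mem_insert_of_mem (Finset.mem_singleton_self w)
                · rw [Finset.mem_singleton]; exact hwv
              · intro ρ hρ hss
                have hvρ : v ∈ ρ := hss.subset (Finset.mem_singleton_self v)
                refine Finset.Subset.antisymm (hmemτ ρ hρ hvρ) ?_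
                intro x hx
                rcases Finset.mem_insert.mp hx with rfl | hx2
                · exact hvρ
                · rw [Finset.mem_singleton] at hx2
                  rw [hx2]
                  obtain ⟨y, hyρ, hy1⟩ := (Finset.ssubset_iff_of_subset hss.subset).mp hss
                  have hyv : y ≠ v := fun h => hy1 (h ▸ Finset.mem_singleton_self v)
                  have hyy : y ∈ insert v ({w} : Finset V) := hmemτ ρ hρ hvρ hyρ
                  rcases Finset.mem_insert.mp hyy with h | h
                  · exact absurd h hyv
                  · rw [Finset.mem_singleton] at h
                    exact h ▸ hyρ
            have hstep : StepGE 1 (flagOn G S) (freeRemove _ _ _ hfree) :=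
              stepGE_of_free _ _ _ hfree (by simp)
            have hXeq : freeRemove _ _ _ hfree = flagOn G (S.erase v) := by
              apply AbsComplex.ext'
              show (flagOn G S).faces \ {{v}, insert v {w}} = (flagOn G (S.erase v)).faces
              rw [hAfaces]
              ext ρ
              constructor
              · rintro ⟨hρ, hρnot⟩
                refine ⟨hρ, fun hvρ => ?_⟩
                have hsub := hmemτ ρ hρ hvρ
                rcases eq_or_ne ρ (insert v {w}) with rfl | hne
                · exact hρnot (Or.inr rfl)
                · have : ρ = {v} := by
                    have hwρ : w ∉ ρ := by
                      intro hwρ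
                      apply hne
                      refine Finset.Subset.antisymm hsub ?_
                      intro x hx
                      rcases Finset.mem_insert.mp hx with rfl | hx2
                      · exact hvρ
                      · rw [Finset.mem_singleton] at hx2; exact hx2 ▸ hwρ
                    refine Finset.Subset.antisymm ?_ (Finset.singleton_subset_iff.mpr hvρ)
                    intro x hx
                    rcases Finset.mem_insert.mp (hsub hx) with rfl | hx2
                    · exact Finset.mem_singleton_self x
                    · rw [Finset.mem_singleton] at hx2
                      exact absurd (hx2 ▸ hx) hwρ
                  exact hρnot (Or.inl this)
              · rintro ⟨hρ, hvρ⟩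
                refine ⟨hρ, ?_⟩
                rintro (rfl | rfl)
                · exact hvρ (Finset.mem_singleton_self v)
                · exact hvρ (Finset.mem_insert_self v {w})
            refine ⟨A', Relation.ReflTransGen.head ?_ hA'r, hA'b⟩
            rw [← hXeq]
            exact hstep
          · -- d ≥ 2 : collapse the link using the outer induction, lift, then recurse
            have hNbound : N.card ≤ 2 * e + 2 := by omega
            have hlink : ∃ L', Reaches e (flagOn G N) L' ∧ ∀ σ ∈ L'.faces, σ.card ≤ e := by
              rcases ihe he1 N hNbound with h | ⟨hc, _⟩
              · exact h
              · omega
            obtain ⟨L', hL'r, hL'b⟩ := hlink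
            have hstar : StarOf (flagOn G S) v (flagOn G N) :=
              starOf_flagOn G S v hvS N hNmem
            obtain ⟨X', hX'r, hX'star, hX'same⟩ := lift_reaches e hL'r (flagOn G S) v hstar
            obtain ⟨hv1, hmemL', hstarm'⟩ := hX'star
            have hAX' : (flagOn G (S.erase v)).faces ⊆ X'.faces := by
              rw [hAfaces, ← hX'same]
              exact Set.sep_subset _ _
            have hjunk : ∀ ρ ∈ X'.faces, ρ ∉ (flagOn G (S.erase v)).faces →
                ρ.card ≤ e + 1 := by
              intro ρ hρ hρA
              have hvρ : v ∈ ρ := by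
                by_contra hvρ
                apply hρA
                rw [hAfaces, ← hX'same]
                exact ⟨hρ, hvρ⟩
              rcases hstarm' ρ hρ hvρ with h | h
              · rw [h, Finset.card_singleton]; omega
              · have h1 := hL'b _ h
                have h2 : ρ.card = (ρ.erase v).card + 1 := by
                  rw [Finset.card_erase_of_mem hvρ]
                  have : 1 ≤ ρ.card := Finset.card_pos.mpr ⟨v, hvρ⟩
                  omega
                omega
            obtain ⟨X'', hX''r, hX''f⟩ := reaches_with_junk (e + 1) hA'r X' hAX' hjunk
            refine ⟨X'', Relation.ReflTransGen.trans hX'r hX''r, ?_⟩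
            intro σ hσ
            rw [hX''f] at hσ
            rcases hσ with hσ | ⟨hσX, hσA⟩
            · exact hA'b σ hσ
            · exact hjunk σ hσX hσA
      · -- every vertex has exactly one non-neighbour
        push_neg at hv2
        have huniq : ∀ v ∈ S, ∃! u, u ∈ S ∧ u ≠ v ∧ ¬ G.Adj v u := by
          intro v hvS
          obtain ⟨x, hxS, hxv, hnadj⟩ := hw v hvS
          refine ⟨x, ⟨hxS, hxv, hnadj⟩, ?_⟩
          · intro y ⟨hyS, hyv, hynadj⟩
            by_contra hyx
            exact hnadj (hv2 v hvS y hyS x hxS hyx hyv hxv hynadj)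
        by_cases hcard : S.card = 2 * (e + 1) + 2
        · exact Or.inr ⟨hcard, huniq⟩
        · -- contradiction: a clique of size > d has too many partners
          exfalso
          have hσS : σbig ⊆ S := hσbigmem.2.1
          classical
          set f : V → V := fun x => if hx : x ∈ S then (huniq x hx).choose else x with hf
          have hfspec : ∀ x (hx : x ∈ S), f x ∈ S ∧ f x ≠ x ∧ ¬ G.Adj x (f x) := by
            intro x hx
            have := (huniq x hx).choose_spec.1
            simp only [hf, dif_pos hx]
            exact this
          have hfuniq : ∀ x (hx : x ∈ S) y, y ∈ S → y ≠ x → ¬ G.Adj x y → y = f x := by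
            intro x hx y h1 h2 h3
            have := (huniq x hx).choose_spec.2 y ⟨h1, h2, h3⟩
            simp only [hf, dif_pos hx]
            exact this
          have hmaps : ∀ x ∈ σbig, f x ∈ S \ σbig := by
            intro x hx
            obtain ⟨h1, h2, h3⟩ := hfspec x (hσS hx)
            refine Finset.mem_sdiff.mpr ⟨h1, fun hcontra => ?_⟩
            exact h3 (adj_of_mem_clique hσbigmem.2.2 hx hcontra (fun h => h2 h.symm))
          have hinj : ∀ x ∈ σbig, ∀ y ∈ σbig, f x = f y → x = y := by
            intro x hx y hy hxy
            obtain ⟨h1x, h2x, h3x⟩ := hfspec x (hσS hx)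
            obtain ⟨h1y, h2y, h3y⟩ := hfspec y (hσS hy)
            have hx' : x = f (f x) := by
              refine hfuniq (f x) h1x x (hσS hx) (fun h => h2x h.symm) ?_
              intro h
              exact h3x h.symm
            have hy' : y = f (f y) := by
              refine hfuniq (f y) h1y y (hσS hy) (fun h => h2y h.symm) ?_
              intro h
              exact h3y h.symm
            rw [hx', hxy, ← hy']
          have hcard1 : σbig.card ≤ (S \ σbig).card :=
            Finset.card_le_card_of_injOn f hmaps hinj
          have hcard2 : (S \ σbig).card = S.card - σbig.card := Finset.card_sdiff_of_subset hσS
          have hcard3 : σbig.card ≤ S.card := Finset.card_le_card hσS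
          omega

end Stmt4Aux
namespace Stmt4Aux
variable {V : Type*}

/-- From "every vertex has a unique non-neighbour" on `2d+2` vertices, build the
isomorphism with the cross-polytope graph. -/
lemma cross_iso [Fintype V] (G : SimpleGraph V) (d : ℕ)
    (hcard : Fintype.card V = 2 * d + 2)
    (hm : ∀ v : V, ∃! u : V, u ≠ v ∧ ¬ G.Adj v u) :
    Nonempty (G ≃g crossGraph d) := by
  classical
  set f : V → V := fun v => (hm v).choose with hf
  have hfspec : ∀ v : V, f v ≠ v ∧ ¬ G.Adj v (f v) := fun v => (hm v).choose_spec.1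
  have hfuniq : ∀ v u : V, u ≠ v → ¬ G.Adj v u → u = f v :=
    fun v u h1 h2 => (hm v).choose_spec.2 u ⟨h1, h2⟩
  have hinv : ∀ v, f (f v) = v := by
    intro v
    exact (hfuniq (f v) v (fun h => (hfspec v).1 h.symm)
      (fun h => (hfspec v).2 h.symm)).symm
  have hadj_iff : ∀ u v : V, G.Adj u v ↔ (v ≠ u ∧ v ≠ f u) := by
    intro u v
    constructor
    · intro h
      refine ⟨fun he => G.loopless.irrefl u (he ▸ h), fun he => (hfspec u).2 (he ▸ h)⟩
    · rintro ⟨h1, h2⟩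
      by_contra h3
      exact h2 (hfuniq u v h1 h3)
  -- the setoid pairing v with f v
  let r : V → V → Prop := fun a b => b = a ∨ b = f a
  have hrefl : ∀ a, r a a := fun a => Or.inl rfl
  have hsymm : ∀ {a b}, r a b → r b a := by
    rintro a b (rfl | rfl)
    · exact Or.inl rfl
    · exact Or.inr (hinv a).symm
  have htrans : ∀ {a b c}, r a b → r b c → r a c := by
    rintro a b c (rfl | rfl) h2
    · exact h2
    · rcases h2 with rfl | rfl
      · exact Or.inr rfl
      · exact Or.inl (hinv a)
  let s : Setoid V := ⟨r, hrefl, @hsymm, @htrans⟩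
  letI : DecidableEq (Quotient s) := Classical.decEq _
  have hexact : ∀ {a b : V}, (Quotient.mk s a) = (Quotient.mk s b) → r a b :=
    fun h => Quotient.exact h
  let g : V → Quotient s × Fin 2 :=
    fun v => (Quotient.mk s v, if (Quotient.mk s v).out = v then 0 else 1)
  have hout : ∀ v : V, (Quotient.mk s v).out = v ∨ (Quotient.mk s v).out = f v := by
    intro v
    have : (Quotient.mk s ((Quotient.mk s v).out)) = Quotient.mk s v :=
      Quotient.out_eq _
    exact hexact this.symm
  have hginj : Function.Injective g := by
    intro u v huv
    have h1 : Quotient.mk s u = Quotient.mk s v := congrArg Prod.fst huv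
    have h2 := congrArg Prod.snd huv
    rcases hexact h1 with rfl | rfl
    · rfl
    · exfalso
      have hne : f u ≠ u := (hfspec u).1
      simp only [g] at h2
      rw [← h1] at h2
      rcases hout u with h3 | h3
      · rw [if_pos h3, if_neg (by rw [h3]; exact fun hh => hne hh.symm)] at h2
        exact absurd h2 (by decide)
      · rw [if_neg (by rw [h3]; exact fun hh => hne hh), if_pos h3] at h2
        exact absurd h2 (by decide)
  have hgsurj : Function.Surjective g := by
    rintro ⟨q, i⟩
    fin_cases i
    · exact ⟨q.out, by simp [g, Quotient.out_eq]⟩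
    · refine ⟨f q.out, ?_⟩
      have hq : Quotient.mk s (f q.out) = q := by
        have h5 : Quotient.mk s (f q.out) = Quotient.mk s q.out :=
          Quotient.sound (hsymm (Or.inr rfl : r q.out (f q.out)))
        rw [h5, Quotient.out_eq]
      simp only [g, hq]
      rw [if_neg (fun h => (hfspec q.out).1 h.symm)]
      rfl
  let e1 : V ≃ Quotient s × Fin 2 := Equiv.ofBijective g ⟨hginj, hgsurj⟩
  have hcardq : Fintype.card (Quotient s) = d + 1 := by
    have h1 : Fintype.card V = Fintype.card (Quotient s × Fin 2) := Fintype.card_congr e1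
    rw [Fintype.card_prod, Fintype.card_fin] at h1
    omega
  let e2 : Quotient s ≃ Fin (d + 1) := Fintype.equivFinOfCardEq hcardq
  let e : V ≃ Fin (d + 1) × Fin 2 := e1.trans (e2.prodCongr (Equiv.refl (Fin 2)))
  refine ⟨⟨e, ?_⟩⟩
  intro u v
  show (e u).1 ≠ (e v).1 ↔ G.Adj u v
  have he : ∀ x, (e x).1 = e2 (Quotient.mk s x) := fun x => rfl
  rw [he, he]
  rw [ne_eq, EmbeddingLike.apply_eq_iff_eq]
  constructor
  · intro h
    rw [hadj_iff]
    constructor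
    · rintro rfl; exact h rfl
    · rintro rfl
      exact h (Quotient.sound (Or.inr rfl : r u (f u)))
  · intro h hq
    rcases hexact hq with h2 | h2
    · rw [h2] at h; exact G.loopless.irrefl u h
    · rw [h2] at h; exact (hfspec u).2 h

end Stmt4Aux

/-- for `d ≥ 1`, the boundary of the `(d+1)`-dimensional cross-polytope is
the unique non-`d`-collapsible flag complex on fewer than `2d+3` vertices; in particular
every flag complex on at most `2d+1` vertices is `d`-collapsible. -/
theorem stmt4 {V : Type*} [Fintype V] (d : ℕ) (hd : 1 ≤ d) (G : SimpleGraph V)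
    (hcard : Fintype.card V < 2 * d + 3) :
    (¬ Collapsible d (cliqueComplex G) → Nonempty (G ≃g crossGraph d)) ∧
    (Fintype.card V ≤ 2 * d + 1 → Collapsible d (cliqueComplex G)) := by
  classical
  have hflag : cliqueComplex G = Stmt4Aux.flagOn G Finset.univ := by
    apply Stmt4Aux.AbsComplex.ext'
    ext σ
    show (σ.Nonempty ∧ G.IsClique σ) ↔ (σ.Nonempty ∧ σ ⊆ Finset.univ ∧ G.IsClique σ)
    exact ⟨fun ⟨h1, h2⟩ => ⟨h1, Finset.subset_univ σ, h2⟩, fun ⟨h1, _, h2⟩ => ⟨h1, h2⟩⟩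
  have hcu : (Finset.univ : Finset V).card = Fintype.card V := Finset.card_univ
  have hmain := Stmt4Aux.main_thm G d hd Finset.univ (by omega)
  constructor
  · intro hnc
    rcases hmain with ⟨Y, hr, hb⟩ | ⟨hc, hu⟩
    · exfalso
      apply hnc
      refine ⟨Y, ?_, hb⟩
      rw [hflag]
      exact Stmt4Aux.Reaches.collapseSteps hr
    · apply Stmt4Aux.cross_iso G d (by omega)
      intro v
      obtain ⟨u, ⟨_, h1, h2⟩, hu2⟩ := hu v (Finset.mem_univ v)
      exact ⟨u, ⟨h1, h2⟩, fun y hy => hu2 y ⟨Finset.mem_univ y, hy⟩⟩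
  · intro hle
    rcases hmain with ⟨Y, hr, hb⟩ | ⟨hc, _⟩
    · refine ⟨Y, ?_, hb⟩
      rw [hflag]
      exact Stmt4Aux.Reaches.collapseSteps hr
    · exfalso; omega
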